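/- For all 0 ≤ k ≤ n, W_{m,r,q}(n,k) = q^{C(k,2)} ∑_{c_0 + c_1 + ... + c_k = n-k} ∏_{j=0}^{k} (m[j]_q + r)^{c_j}, where the sum is over all (k+1)-tuples of non-negative integers summing to n-k (i.e., W_{m,r,q}(n,k) equals q^{C(k,2)} times the complete homogeneous symmetric polynomial of degree n-k in the variables m[0]_q + r, ..., m[k]_q + r). -/

import Mathlib

open Finset

noncomputable def qint (q : ℂ) (n : ℕ) : ℂ := (q ^ n - 1) / (q - 1)

/-- (q,r)-Whitney numbers of the first kind, via the triangular recurrence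
`w(n+1,k) = q^{-n} (w(n,k-1) - (m[n]_q + r) w(n,k))`, with `w(0,0)=1` and
`w(n,k)=0` for `k>n` (the `k<0` values are zero, absorbed in the `k=0` case). -/
noncomputable def qw (q m r : ℂ) : ℕ → ℕ → ℂ
  | 0, 0 => 1
  | 0, _ + 1 => 0
  | n + 1, 0 => q ^ (-(n : ℤ)) * (0 - (m * qint q n + r) * qw q m r n 0)
  | n + 1, k + 1 => q ^ (-(n : ℤ)) * (qw q m r n k - (m * qint q n + r) * qw q m r n (k + 1))

/-- (q,r)-Whitney numbers of the second kind, via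
`W(n+1,k) = q^{k-1} W(n,k-1) + (m[k]_q + r) W(n,k)`, with `W(0,0)=1`. -/
noncomputable def qW (q m r : ℂ) : ℕ → ℕ → ℂ
  | 0, 0 => 1
  | 0, _ + 1 => 0
  | n + 1, 0 => (m * qint q 0 + r) * qW q m r n 0
  | n + 1, k + 1 => q ^ k * qW q m r n k + (m * qint q (k + 1) + r) * qW q m r n (k + 1)




noncomputable def hS (x : ℕ → ℂ) (k d : ℕ) : ℂ :=
  ∑ c ∈ Finset.Nat.antidiagonalTuple k d, ∏ j : Fin k, x j ^ c j

lemma hS_zero (x : ℕ → ℂ) (k : ℕ) : hS x k 0 = 1 := by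
  simp [hS, Finset.Nat.antidiagonalTuple_zero_right]

lemma sum_snoc (k n : ℕ) (f : (Fin (k + 1) → ℕ) → ℂ) :
    ∑ c ∈ Finset.Nat.antidiagonalTuple (k + 1) n, f c
      = ∑ p ∈ Finset.HasAntidiagonal.antidiagonal n,
          ∑ c ∈ Finset.Nat.antidiagonalTuple k p.1, f (Fin.snoc c p.2) := by
  rw [Finset.sum_sigma']
  refine Finset.sum_nbij'
    (fun c => ⟨(∑ j : Fin k, c j.castSucc, c (Fin.last k)), Fin.init c⟩)
    (fun pc => Fin.snoc pc.2 pc.1.2) ?_ ?_ ?_ ?_ ?_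
  · intro c hc
    simp only [Finset.Nat.mem_antidiagonalTuple] at hc
    simp only [Finset.mem_sigma, Finset.HasAntidiagonal.mem_antidiagonal,
      Finset.Nat.mem_antidiagonalTuple]
    refine ⟨by rw [← hc, Fin.sum_univ_castSucc], ?_⟩
    simp [Fin.init]
  · rintro ⟨⟨a, b⟩, c⟩ h
    simp only [Finset.mem_sigma, Finset.HasAntidiagonal.mem_antidiagonal,
      Finset.Nat.mem_antidiagonalTuple] at h ⊢
    rw [Fin.sum_univ_castSucc]
    simp only [Fin.snoc_castSucc, Fin.snoc_last]
    rw [h.2, h.1]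
  · intro c hc
    simp [Fin.snoc_init_self]
  · rintro ⟨⟨a, b⟩, c⟩ h
    simp only [Finset.mem_sigma, Finset.HasAntidiagonal.mem_antidiagonal,
      Finset.Nat.mem_antidiagonalTuple] at h
    have h2 : ∑ j : Fin k, (Fin.snoc c b : Fin (k+1) → ℕ) j.castSucc = a := by
      simp only [Fin.snoc_castSucc]; exact h.2
    simp only [Fin.snoc_last, Fin.init_snoc, h2]
  · intro c hc
    simp [Fin.snoc_init_self]

lemma hS_succ (x : ℕ → ℂ) (k n : ℕ) :
    hS x (k + 1) n = ∑ p ∈ Finset.HasAntidiagonal.antidiagonal n, hS x k p.1 * x k ^ p.2 := by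
  rw [hS, sum_snoc]
  refine Finset.sum_congr rfl fun p _ => ?_
  rw [hS, Finset.sum_mul]
  refine Finset.sum_congr rfl fun c _ => ?_
  rw [Fin.prod_univ_castSucc]
  simp [Fin.snoc_castSucc, Fin.snoc_last]

lemma hS_rec (x : ℕ → ℂ) (k d : ℕ) :
    hS x (k + 1) (d + 1) = hS x k (d + 1) + x k * hS x (k + 1) d := by
  rw [hS_succ, Finset.Nat.antidiagonal_succ', Finset.sum_cons, Finset.sum_map, hS_succ,
    Finset.mul_sum]
  simp only [Function.Embedding.coe_prodMap, Function.Embedding.coeFn_mk,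
    Function.Embedding.refl_apply, Prod.map, pow_zero, mul_one, pow_succ]
  ring_nf
  congr 1
  refine Finset.sum_congr rfl fun p _ => ?_
  ring



lemma qW_eq_zero (q m r : ℂ) : ∀ n k : ℕ, n < k → qW q m r n k = 0 := by
  intro n
  induction n with
  | zero =>
    rintro (_ | k) h
    · omega
    · rfl
  | succ n ih =>
    rintro (_ | k) h
    · omega
    · show q ^ k * qW q m r n k + (m * qint q (k + 1) + r) * qW q m r n (k + 1) = 0
      rw [ih k (by omega), ih (k + 1) (by omega)]
      ring

theorem stmt9' (q m r : ℂ) (n k : ℕ) (hkn : k ≤ n) :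
    qW q m r n k = q ^ k.choose 2 * hS (fun t => m * qint q t + r) (k + 1) (n - k) := by
  induction n generalizing k with
  | zero =>
    interval_cases k
    simp [qW, hS_zero]
  | succ n ih =>
    match k with
    | 0 =>
      show (m * qint q 0 + r) * qW q m r n 0 = _
      rw [ih 0 (Nat.zero_le n)]
      simp only [Nat.sub_zero, Nat.choose_self, pow_zero, one_mul, Nat.choose_zero_right]
      rw [show (0:ℕ).choose 2 = 0 from rfl]
      simp only [pow_zero, one_mul]
      rw [hS, hS, Finset.Nat.antidiagonalTuple_one, Finset.Nat.antidiagonalTuple_one]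
      simp [pow_succ, mul_comm]
    | k + 1 =>
      show q ^ k * qW q m r n k + (m * qint q (k + 1) + r) * qW q m r n (k + 1) = _
      rcases Nat.lt_or_ge k n with hk | hk
      · -- k + 1 ≤ n
        rw [ih k (le_of_lt hk), ih (k + 1) hk]
        have h1 : n - k = (n - (k + 1)) + 1 := by omega
        have h2 : n + 1 - (k + 1) = (n - (k + 1)) + 1 := by omega
        rw [h2, hS_rec]
        have hch : (k + 1).choose 2 = k.choose 2 + k := by
          rw [Nat.choose_succ_succ, Nat.choose_one_right, Nat.add_comm]
        rw [hch, pow_add, h1]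
        ring
      · -- k = n
        have hk' : k = n := by omega
        subst hk'
        rw [ih k le_rfl, qW_eq_zero q m r k (k + 1) (by omega)]
        simp only [Nat.sub_self, hS_zero, mul_one, mul_zero, add_zero]
        have hch : (k + 1).choose 2 = k.choose 2 + k := by
          rw [Nat.choose_succ_succ, Nat.choose_one_right, Nat.add_comm]
        rw [hch, pow_add]
        ring

theorem stmt9 (q m r : ℂ) (hq0 : q ≠ 0) (hq1 : q ≠ 1) (n k : ℕ) (hkn : k ≤ n) :
    qW q m r n k =
      q ^ k.choose 2 *
        ∑ c ∈ Finset.Nat.antidiagonalTuple (k + 1) (n - k),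
          ∏ j : Fin (k + 1), (m * qint q j + r) ^ c j := by
  exact stmt9' q m r n k hkn
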